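/- Let i_x = ⌊n x/(x+1)⌋. There exists N such that for all n ≥ N, all real x with (log n)/(6n) ≤ x ≤ 1, and every natural number i satisfying either i ≤ i_x − i_x^{3/4} or i_x + i_x^{3/4} ≤ i ≤ 60 i_x, one has C(n,i)^2 x^{2i} ≤ 4π i_x e^{−√(2nx)/16} · C(n,i_x)^2 x^{2 i_x}. -/

import Mathlib

open Real

/-- `i_x = ⌊n x/(x+1)⌋`. -/
noncomputable def idx (n : ℕ) (x : ℝ) : ℕ := ⌊(n : ℝ) * x / (x + 1)⌋₊

lemma aux_inv_one_add_le {u : ℝ} (h0 : 0 ≤ u) (h1 : u ≤ 1) :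
    1 / (1 + u) ≤ Real.exp (-(u / 2)) := by
  have h2 : (0:ℝ) < 1 + u := by linarith
  have h3 : 1 - u/2 ≤ Real.exp (-(u/2)) := by
    have := Real.add_one_le_exp (-(u/2)); linarith
  have h4 : 1 / (1 + u) ≤ 1 - u/2 := by
    rw [div_le_iff₀ h2]; nlinarith
  linarith

lemma aux_seq_mono (f : ℕ → ℝ) (m : ℕ)
    (h : ∀ j, j < m → f j ≤ f (j+1)) :
    ∀ i j, i ≤ j → j ≤ m → f i ≤ f j := by
  intro i j
  induction j with
  | zero => intro hij _; have : i = 0 := Nat.le_zero.mp hij; simp [this]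
  | succ k ih =>
    intro hij hjm
    rcases Nat.eq_or_lt_of_le hij with rfl | hlt
    · exact le_rfl
    · exact le_trans (ih (by omega) (by omega)) (h k (by omega))

lemma aux_seq_anti (f : ℕ → ℝ) (a : ℕ)
    (h : ∀ j, a ≤ j → f (j+1) ≤ f j) :
    ∀ i, a ≤ i → f i ≤ f a := by
  intro i
  induction i with
  | zero => intro hai; have : a = 0 := Nat.le_zero.mp hai; simp [this]
  | succ k ih =>
    intro hai
    rcases Nat.eq_or_lt_of_le hai with heq | hlt
    · rw [heq]
    · exact le_trans (h k (by omega)) (ih (by omega))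

lemma aux_tail_up (f : ℕ → ℝ) (m : ℕ) (hf : ∀ j, 0 ≤ f j)
    (hstep : ∀ j : ℕ, m ≤ j → f (j+1) * ((j:ℝ)+1) ≤ f j * ((m:ℝ) + 2)) :
    ∀ K : ℕ, 1 ≤ K → K ≤ m →
      f (m+K) ≤ 2 * f m * Real.exp (-(((K:ℝ)-1) * ((K:ℝ)-2) / (4 * ((m:ℝ)+2)))) := by
  intro K
  induction K with
  | zero => omega
  | succ K ih =>
    intro _ hKm
    push_cast
    rcases Nat.eq_zero_or_pos K with rfl | hK1
    · have h := hstep m le_rfl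
      have hb : f (m+1) ≤ 2 * f m := by
        nlinarith [hf m, hf (m+1), Nat.cast_nonneg (α := ℝ) m,
          mul_nonneg (hf m) (Nat.cast_nonneg (α := ℝ) m)]
      norm_num
      exact hb
    · have ihk := ih hK1 (by omega)
      have h2 := hstep (m+K) (Nat.le_add_right _ _)
      push_cast at h2
      have hKR1 : (1:ℝ) ≤ (K:ℝ) := by exact_mod_cast hK1
      have hKmR : (K:ℝ) ≤ (m:ℝ) := by exact_mod_cast (by omega : K ≤ m)
      have hm2 : (0:ℝ) < (m:ℝ)+2 := by positivity
      set u : ℝ := ((K:ℝ)-1)/((m:ℝ)+2) with hu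
      have hu0 : 0 ≤ u := by apply div_nonneg <;> linarith
      have hu1 : u ≤ 1 := by rw [hu, div_le_one hm2]; linarith
      have hden : (0:ℝ) < (m:ℝ)+(K:ℝ)+1 := by linarith
      have hid : (1/(1+u)) * ((m:ℝ)+(K:ℝ)+1) = (m:ℝ)+2 := by
        rw [hu]
        have h1u : 1 + ((K:ℝ)-1)/((m:ℝ)+2) = ((m:ℝ)+(K:ℝ)+1)/((m:ℝ)+2) := by
          field_simp; ring
        rw [h1u]
        field_simp
      have hr : f (m+K+1) * ((m:ℝ)+(K:ℝ)+1)
          ≤ (f (m+K) * Real.exp (-(u/2))) * ((m:ℝ)+(K:ℝ)+1) := by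
        have hinv := aux_inv_one_add_le hu0 hu1
        calc f (m+K+1) * ((m:ℝ)+(K:ℝ)+1) ≤ f (m+K) * ((m:ℝ)+2) := h2
        _ = (f (m+K) * (1/(1+u))) * ((m:ℝ)+(K:ℝ)+1) := by rw [← hid]; ring
        _ ≤ (f (m+K) * Real.exp (-(u/2))) * ((m:ℝ)+(K:ℝ)+1) := by
            exact mul_le_mul_of_nonneg_right
              (mul_le_mul_of_nonneg_left hinv (hf (m+K))) (le_of_lt hden)
      have hr' : f (m+K+1) ≤ f (m+K) * Real.exp (-(u/2)) :=
        le_of_mul_le_mul_right hr hden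
      have heq : -(((K:ℝ)-1)*((K:ℝ)-2)/(4*((m:ℝ)+2))) + -(u/2)
          = -((((K:ℝ)+1)-1)*(((K:ℝ)+1)-2)/(4*((m:ℝ)+2))) := by
        rw [hu]; field_simp; ring
      calc f (m+(K+1)) = f (m+K+1) := by ring_nf
      _ ≤ f (m+K) * Real.exp (-(u/2)) := hr'
      _ ≤ (2 * f m * Real.exp (-(((K:ℝ)-1)*((K:ℝ)-2)/(4*((m:ℝ)+2))))) * Real.exp (-(u/2)) :=
          mul_le_mul_of_nonneg_right ihk (Real.exp_pos _).le
      _ = 2 * f m * Real.exp (-(((K:ℝ)-1)*((K:ℝ)-2)/(4*((m:ℝ)+2))) + -(u/2)) := by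
          rw [Real.exp_add]; ring
      _ = 2 * f m * Real.exp (-((((K:ℝ)+1)-1)*(((K:ℝ)+1)-2)/(4*((m:ℝ)+2)))) := by
          rw [heq]

lemma aux_tail_down (f : ℕ → ℝ) (m : ℕ) (hm : 1 ≤ m) (hf : ∀ j, 0 ≤ f j)
    (hstep : ∀ k : ℕ, 1 ≤ k → k ≤ m →
      f (m - k) * (m:ℝ) ≤ f (m - k + 1) * ((m:ℝ) - (k:ℝ) + 1)) :
    ∀ K : ℕ, K ≤ m → f (m - K) ≤ f m * Real.exp (-((K:ℝ) * ((K:ℝ)-1) / (2*(m:ℝ)))) := by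
  intro K
  induction K with
  | zero => intro _; simp
  | succ K ih =>
    intro hKm
    push_cast
    have hKm' : K ≤ m := by omega
    have h1 := ih hKm'
    have h2 := hstep (K+1) (by omega) hKm
    have hmk : m - (K+1) + 1 = m - K := by omega
    rw [hmk] at h2
    push_cast at h2
    have hm0 : (0:ℝ) < (m:ℝ) := by exact_mod_cast hm
    have hKmR : (K:ℝ) ≤ (m:ℝ) := by exact_mod_cast hKm'
    have hK0 : (0:ℝ) ≤ (K:ℝ) := Nat.cast_nonneg K
    have h3 : f (m-(K+1)) ≤ f (m-K) * (((m:ℝ)-(K:ℝ))/(m:ℝ)) := by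
      rw [mul_div_assoc'] at *
      rw [le_div_iff₀ hm0]
      nlinarith [h2]
    have hexp : ((m:ℝ)-(K:ℝ))/(m:ℝ) ≤ Real.exp (-((K:ℝ)/(m:ℝ))) := by
      have ha := Real.add_one_le_exp (-((K:ℝ)/(m:ℝ)))
      have hb : ((m:ℝ)-(K:ℝ))/(m:ℝ) = -((K:ℝ)/(m:ℝ)) + 1 := by field_simp; ring
      rw [hb]; exact ha
    have hq : (0:ℝ) ≤ ((m:ℝ)-(K:ℝ))/(m:ℝ) := div_nonneg (by linarith) hm0.le
    have heq : -((K:ℝ)*((K:ℝ)-1)/(2*(m:ℝ))) + -((K:ℝ)/(m:ℝ))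
        = -(((K:ℝ)+1)*(((K:ℝ)+1)-1)/(2*(m:ℝ))) := by
      field_simp; ring
    calc f (m-(K+1)) ≤ f (m-K) * (((m:ℝ)-(K:ℝ))/(m:ℝ)) := h3
    _ ≤ (f m * Real.exp (-((K:ℝ)*((K:ℝ)-1)/(2*(m:ℝ))))) * (((m:ℝ)-(K:ℝ))/(m:ℝ)) :=
        mul_le_mul_of_nonneg_right h1 hq
    _ ≤ (f m * Real.exp (-((K:ℝ)*((K:ℝ)-1)/(2*(m:ℝ))))) * Real.exp (-((K:ℝ)/(m:ℝ))) := by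
        apply mul_le_mul_of_nonneg_left hexp
        exact mul_nonneg (hf m) (Real.exp_pos _).le
    _ = f m * Real.exp (-((K:ℝ)*((K:ℝ)-1)/(2*(m:ℝ))) + -((K:ℝ)/(m:ℝ))) := by
        rw [Real.exp_add]; ring
    _ = f m * Real.exp (-(((K:ℝ)+1)*(((K:ℝ)+1)-1)/(2*(m:ℝ)))) := by rw [heq]

lemma aux_num_down (sq KR dd ss mm : ℝ) (h1 : sq ≤ 3*ss) (h2 : dd*dd = mm*ss)
    (h3 : dd ≤ mm/2) (h4 : dd ≤ KR) (h5 : 600 ≤ dd) (h6 : 600 ≤ ss) (h7 : 800000 ≤ mm) :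
    sq * mm ≤ KR*(KR-1) * 16 := by
  nlinarith [mul_nonneg (by linarith : (0:ℝ) ≤ KR - dd) (by linarith : (0:ℝ) ≤ KR + dd - 1),
    mul_nonneg (by linarith : (0:ℝ) ≤ ss - 600) (by linarith : (0:ℝ) ≤ mm),
    mul_le_mul_of_nonneg_right h1 (by linarith : (0:ℝ) ≤ mm)]

lemma aux_num_up (sq KR dd ss mm : ℝ) (h1 : sq ≤ 3*ss) (h2 : dd*dd = mm*ss)
    (h3 : dd ≤ mm/2) (h4 : dd ≤ KR) (h5 : 600 ≤ dd) (h6 : 600 ≤ ss) (h7 : 800000 ≤ mm) :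
    sq * (2*(mm+2)) ≤ (KR-1)*(KR-2) * 16 := by
  nlinarith [mul_nonneg (by linarith : (0:ℝ) ≤ KR - dd) (by linarith : (0:ℝ) ≤ KR + dd - 3),
    mul_nonneg (by linarith : (0:ℝ) ≤ ss - 600) (by linarith : (0:ℝ) ≤ mm),
    mul_nonneg (by linarith : (0:ℝ) ≤ mm - 800000) (by linarith : (0:ℝ) ≤ ss),
    mul_le_mul_of_nonneg_right h1 (by linarith : (0:ℝ) ≤ 2*(mm+2))]

set_option maxHeartbeats 1000000 in
/-- for `n` large, `(log n)/(6n) ≤ x ≤ 1`, and any `i` with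
`i ≤ i_x - i_x^{3/4}` or `i_x + i_x^{3/4} ≤ i ≤ 60 i_x`,
`C(n,i)^2 x^{2i} ≤ 4π i_x e^{-√(2nx)/16} C(n,i_x)^2 x^{2 i_x}`. -/
theorem stmt_17 :
    ∃ N : ℕ, ∀ n : ℕ, N ≤ n → ∀ x : ℝ,
      Real.log n / (6 * n) ≤ x → x ≤ 1 → ∀ i : ℕ,
      ((i : ℝ) ≤ (idx n x : ℝ) - (idx n x : ℝ) ^ ((3 : ℝ) / 4) ∨
        ((idx n x : ℝ) + (idx n x : ℝ) ^ ((3 : ℝ) / 4) ≤ (i : ℝ) ∧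
          (i : ℝ) ≤ 60 * (idx n x : ℝ))) →
      (n.choose i : ℝ) ^ 2 * x ^ (2 * i) ≤
        4 * π * (idx n x : ℝ) * Real.exp (-Real.sqrt (2 * n * x) / 16) *
          ((n.choose (idx n x) : ℝ) ^ 2 * x ^ (2 * idx n x)) := by
  refine ⟨⌈Real.exp (10^7 : ℝ)⌉₊, ?_⟩
  intro n hn x hxl hxu i hi
  have hnR : Real.exp (10^7 : ℝ) ≤ (n:ℝ) :=
    le_trans (Nat.le_ceil _) (by exact_mod_cast hn)
  have hn1 : (1:ℝ) ≤ (n:ℝ) := le_trans (Real.one_le_exp (by norm_num)) hnR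
  have hn0 : (0:ℝ) < (n:ℝ) := by linarith
  have hlog : (10^7:ℝ) ≤ Real.log n := by
    calc (10^7:ℝ) = Real.log (Real.exp (10^7:ℝ)) := (Real.log_exp _).symm
    _ ≤ Real.log n := Real.log_le_log (Real.exp_pos _) hnR
  have hx0 : 0 < x := lt_of_lt_of_le (div_pos (by linarith) (by positivity)) hxl
  have hL : (10^7:ℝ)/6 ≤ (n:ℝ)*x := by
    have h1 : Real.log n / (6*(n:ℝ)) * (n:ℝ) ≤ x * (n:ℝ) :=
      mul_le_mul_of_nonneg_right hxl hn0.le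
    have h2 : Real.log n / (6*(n:ℝ)) * (n:ℝ) = Real.log n / 6 := by
      field_simp
    rw [h2] at h1
    calc (10^7:ℝ)/6 ≤ Real.log n / 6 := by linarith
    _ ≤ (n:ℝ)*x := by linarith [h1]
  set m : ℕ := idx n x with hm
  have hx1p : (0:ℝ) < x + 1 := by linarith
  have hfl : (m:ℝ) ≤ (n:ℝ)*x/(x+1) := by
    rw [hm]
    exact Nat.floor_le (div_nonneg (mul_nonneg (Nat.cast_nonneg n) hx0.le) hx1p.le)
  have hfl2 : (n:ℝ)*x/(x+1) < (m:ℝ)+1 := by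
    rw [hm]; exact Nat.lt_floor_add_one _
  have h1 : (m:ℝ)*(x+1) ≤ (n:ℝ)*x := (le_div_iff₀ hx1p).mp hfl
  have h2 : (n:ℝ)*x < ((m:ℝ)+1)*(x+1) := (div_lt_iff₀ hx1p).mp hfl2
  have hm_big : (800000:ℝ) ≤ (m:ℝ) := by
    nlinarith [hL, hxu, h2, hx0,
      mul_nonneg (by linarith : (0:ℝ) ≤ 1 - x) (by positivity : (0:ℝ) ≤ (m:ℝ)+1)]
  have hmpos : (0:ℝ) < (m:ℝ) := by linarith
  have hm1 : 1 ≤ m := by exact_mod_cast (show (1:ℝ) ≤ (m:ℝ) by linarith)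
  set s : ℝ := Real.sqrt m with hs
  have hs0 : 0 ≤ s := Real.sqrt_nonneg _
  have hs2 : s*s = (m:ℝ) := Real.mul_self_sqrt hmpos.le
  have hs600 : (600:ℝ) ≤ s := by nlinarith
  set d : ℝ := (m:ℝ) ^ ((3:ℝ)/4) with hd
  have hd0 : 0 ≤ d := Real.rpow_nonneg hmpos.le _
  have hsd : s = (m:ℝ) ^ ((1:ℝ)/2) := by
    rw [hs, Real.sqrt_eq_rpow]
  have hd2 : d*d = (m:ℝ) * s := by
    have e1 : d*d = (m:ℝ)^((3:ℝ)/2) := by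
      rw [hd, ← Real.rpow_add hmpos]; norm_num
    have e2 : (m:ℝ) * s = (m:ℝ)^((3:ℝ)/2) := by
      rw [hsd, show (3:ℝ)/2 = 1 + 1/2 by norm_num, Real.rpow_add hmpos, Real.rpow_one]
    rw [e1, e2]
  have hds : s ≤ d := by
    rw [hsd, hd]
    exact Real.rpow_le_rpow_of_exponent_le (by linarith) (by norm_num)
  have hd600 : (600:ℝ) ≤ d := le_trans hs600 hds
  have hd_half : d ≤ (m:ℝ)/2 := by nlinarith
  set K₀ : ℕ := ⌈d⌉₊ with hK
  have hK0d : d ≤ (K₀:ℝ) := Nat.le_ceil d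
  have hK0lt : (K₀:ℝ) < d + 1 := Nat.ceil_lt_add_one hd0
  have hK01 : 1 ≤ K₀ := by
    have : (1:ℝ) ≤ (K₀:ℝ) := by linarith
    exact_mod_cast this
  have hK0m : K₀ ≤ m := by
    have : (K₀:ℝ) < (m:ℝ) := by linarith
    exact_mod_cast le_of_lt (by exact_mod_cast this : K₀ < m)
  have hsq : Real.sqrt (2*(n:ℝ)*x) ≤ 3*s := by
    have h9 : 2*(n:ℝ)*x ≤ 9*(m:ℝ) := by
      nlinarith [mul_nonneg (by linarith : (0:ℝ) ≤ 1 - x) (by positivity : (0:ℝ) ≤ (m:ℝ)+1)]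
    calc Real.sqrt (2*(n:ℝ)*x) ≤ Real.sqrt (9*(m:ℝ)) := Real.sqrt_le_sqrt h9
    _ = 3*s := by
        rw [show (9:ℝ)*(m:ℝ) = 3^2*(m:ℝ) by norm_num,
          Real.sqrt_mul (by positivity), Real.sqrt_sq (by norm_num), hs]
  -- the sequence
  set F : ℕ → ℝ := fun j => (n.choose j : ℝ) * x ^ j with hF
  have hf0 : ∀ j, 0 ≤ F j := fun j => by
    rw [hF]; positivity
  have hfid : ∀ j : ℕ, F (j+1) * ((j:ℝ)+1) = F j * (x * ((n:ℝ) - j)) := by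
    intro j
    rcases le_or_gt j n with hj | hj
    · have h := Nat.choose_succ_right_eq n j
      have hc : (n.choose (j+1):ℝ) * ((j:ℝ)+1) = (n.choose j : ℝ) * ((n:ℝ) - (j:ℝ)) := by
        have := congrArg (fun t : ℕ => (t:ℝ)) h
        push_cast [Nat.cast_sub hj] at this
        exact this
      rw [hF]
      simp only []
      calc (n.choose (j+1):ℝ)*x^(j+1)*((j:ℝ)+1)
          = ((n.choose (j+1):ℝ)*((j:ℝ)+1))*x^(j+1) := by ring
      _ = ((n.choose j:ℝ)*((n:ℝ)-(j:ℝ)))*x^(j+1) := by rw [hc]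
      _ = (n.choose j:ℝ)*x^j*(x*((n:ℝ)-(j:ℝ))) := by rw [pow_succ]; ring
    · rw [hF]
      simp [Nat.choose_eq_zero_of_lt hj, Nat.choose_eq_zero_of_lt (by omega : n < j+1)]
  have hup_step : ∀ j : ℕ, m ≤ j → F (j+1) * ((j:ℝ)+1) ≤ F j * ((m:ℝ) + 2) := by
    intro j hj
    rw [hfid j]
    apply mul_le_mul_of_nonneg_left _ (hf0 j)
    have hjm : (m:ℝ) ≤ (j:ℝ) := by exact_mod_cast hj
    nlinarith [h2, hxu, hx0, mul_le_mul_of_nonneg_left hjm hx0.le]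
  have hdown_step : ∀ k : ℕ, 1 ≤ k → k ≤ m →
      F (m - k) * (m:ℝ) ≤ F (m - k + 1) * ((m:ℝ) - (k:ℝ) + 1) := by
    intro k hk1 hkm
    have hcast : ((m - k : ℕ):ℝ) = (m:ℝ) - (k:ℝ) := by
      push_cast [Nat.cast_sub hkm]; ring
    have hXX : (m:ℝ) ≤ x*((n:ℝ)-((m-k:ℕ):ℝ)) := by
      rw [hcast]
      nlinarith [h1, mul_nonneg hx0.le (Nat.cast_nonneg (α := ℝ) k)]
    calc F (m-k) * (m:ℝ) ≤ F (m-k) * (x*((n:ℝ)-((m-k:ℕ):ℝ))) :=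
        mul_le_mul_of_nonneg_left hXX (hf0 _)
    _ = F (m-k+1) * (((m-k:ℕ):ℝ)+1) := (hfid (m-k)).symm
    _ = F (m-k+1) * ((m:ℝ)-(k:ℝ)+1) := by rw [hcast]
  have hmono : ∀ j, j < m → F j ≤ F (j+1) := by
    intro j hj
    have hj1 : (0:ℝ) < (j:ℝ)+1 := by positivity
    have hjm : ((j:ℝ)+1) ≤ (m:ℝ) := by exact_mod_cast hj
    have hX : (j:ℝ)+1 ≤ x*((n:ℝ)-(j:ℝ)) := by
      nlinarith [h1, hx0, mul_le_mul_of_nonneg_left hjm (by linarith : (0:ℝ) ≤ x+1)]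
    have := hfid j
    have h' : F j * ((j:ℝ)+1) ≤ F (j+1) * ((j:ℝ)+1) := by
      rw [this]
      exact mul_le_mul_of_nonneg_left hX (hf0 j)
    exact le_of_mul_le_mul_right h' hj1
  -- squares identity
  have hsq_id : ∀ j : ℕ, (n.choose j:ℝ)^2 * x^(2*j) = (F j)^2 := by
    intro j; rw [hF]; simp only []; rw [mul_pow, ← pow_mul, mul_comm j 2]
  have hpi : (3:ℝ) ≤ π := by linarith [Real.pi_gt_three]
  rw [hsq_id i, hsq_id m]
  rcases hi with hlo | ⟨hlo, _⟩
  · -- lower tail : (i:ℝ) ≤ m - d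
    have hiK : i + K₀ ≤ m := by
      have : ((i + K₀ : ℕ):ℝ) < (m:ℝ) + 1 := by push_cast; linarith
      have h' : i + K₀ < m + 1 := by exact_mod_cast this
      omega
    have hfi : F i ≤ F (m - K₀) :=
      aux_seq_mono F m hmono i (m - K₀) (by omega) (by omega)
    have htail := aux_tail_down F m hm1 hf0 hdown_step K₀ hK0m
    have h4 : F i ≤ F m * Real.exp (-((K₀:ℝ)*((K₀:ℝ)-1)/(2*(m:ℝ)))) := le_trans hfi htail
    have hnum : Real.sqrt (2*(n:ℝ)*x)/16 ≤ 2*((K₀:ℝ)*((K₀:ℝ)-1)/(2*(m:ℝ))) := by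
      rw [show 2*((K₀:ℝ)*((K₀:ℝ)-1)/(2*(m:ℝ))) = ((K₀:ℝ)*((K₀:ℝ)-1))/(m:ℝ) by
        field_simp]
      rw [div_le_div_iff₀ (by norm_num) hmpos]
      exact aux_num_down _ _ d s _ hsq hd2 hd_half hK0d hd600 hs600 hm_big
    have h5 : (F i)^2 ≤ (F m * Real.exp (-((K₀:ℝ)*((K₀:ℝ)-1)/(2*(m:ℝ)))))^2 :=
      pow_le_pow_left₀ (hf0 i) h4 2
    have hE : (Real.exp (-((K₀:ℝ)*((K₀:ℝ)-1)/(2*(m:ℝ)))))^2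
        = Real.exp (-(2*((K₀:ℝ)*((K₀:ℝ)-1)/(2*(m:ℝ))))) := by
      rw [sq, ← Real.exp_add]; congr 1; ring
    have h7 : Real.exp (-(2*((K₀:ℝ)*((K₀:ℝ)-1)/(2*(m:ℝ)))))
        ≤ Real.exp (-Real.sqrt (2*(n:ℝ)*x)/16) := by
      apply Real.exp_le_exp.mpr; linarith
    have h8 : (1:ℝ) ≤ 4*π*(m:ℝ) := by nlinarith
    calc (F i)^2 ≤ (F m * Real.exp (-((K₀:ℝ)*((K₀:ℝ)-1)/(2*(m:ℝ)))))^2 := h5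
    _ = (F m)^2 * Real.exp (-(2*((K₀:ℝ)*((K₀:ℝ)-1)/(2*(m:ℝ))))) := by
        rw [mul_pow, hE]
    _ ≤ (F m)^2 * (4*π*(m:ℝ)*Real.exp (-Real.sqrt (2*(n:ℝ)*x)/16)) := by
        apply mul_le_mul_of_nonneg_left _ (sq_nonneg _)
        calc Real.exp (-(2*((K₀:ℝ)*((K₀:ℝ)-1)/(2*(m:ℝ)))))
            ≤ Real.exp (-Real.sqrt (2*(n:ℝ)*x)/16) := h7
        _ = 1 * Real.exp (-Real.sqrt (2*(n:ℝ)*x)/16) := (one_mul _).symm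
        _ ≤ 4*π*(m:ℝ)*Real.exp (-Real.sqrt (2*(n:ℝ)*x)/16) :=
            mul_le_mul_of_nonneg_right h8 (Real.exp_pos _).le
    _ = 4*π*(m:ℝ)*Real.exp (-Real.sqrt (2*(n:ℝ)*x)/16) * (F m)^2 := by ring
  · -- upper tail : m + d ≤ i
    have hiK : m + K₀ ≤ i := by
      have : ((m + K₀ : ℕ):ℝ) < (i:ℝ) + 1 := by push_cast; linarith
      have h' : m + K₀ < i + 1 := by exact_mod_cast this
      omega
    have hanti : ∀ j, m + K₀ ≤ j → F (j+1) ≤ F j := by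
      intro j hj
      have hj' : m ≤ j := by omega
      have hstep := hup_step j hj'
      have hjK : (m:ℝ) + 2 ≤ (j:ℝ) + 1 := by
        have : m + 1 ≤ j := by omega
        have := (Nat.cast_le (α := ℝ)).mpr this
        push_cast at this; linarith
      have hj1 : (0:ℝ) < (j:ℝ)+1 := by positivity
      have h' : F (j+1) * ((j:ℝ)+1) ≤ F j * ((j:ℝ)+1) := by
        calc F (j+1) * ((j:ℝ)+1) ≤ F j * ((m:ℝ)+2) := hstep
        _ ≤ F j * ((j:ℝ)+1) := mul_le_mul_of_nonneg_left hjK (hf0 j)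
      exact le_of_mul_le_mul_right h' hj1
    have hfi : F i ≤ F (m + K₀) := aux_seq_anti F (m+K₀) hanti i hiK
    have htail := aux_tail_up F m hf0 hup_step K₀ hK01 hK0m
    set A : ℝ := ((K₀:ℝ)-1)*((K₀:ℝ)-2)/(4*((m:ℝ)+2)) with hA
    have h4 : F i ≤ 2 * F m * Real.exp (-A) := le_trans hfi htail
    have hnum : Real.sqrt (2*(n:ℝ)*x)/16 ≤ 2*A := by
      rw [hA, show 2*(((K₀:ℝ)-1)*((K₀:ℝ)-2)/(4*((m:ℝ)+2)))
        = (((K₀:ℝ)-1)*((K₀:ℝ)-2))/(2*((m:ℝ)+2)) by field_simp; ring]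
      rw [div_le_div_iff₀ (by norm_num) (by positivity)]
      exact aux_num_up _ _ d s _ hsq hd2 hd_half hK0d hd600 hs600 hm_big
    have h5 : (F i)^2 ≤ (2 * F m * Real.exp (-A))^2 :=
      pow_le_pow_left₀ (hf0 i) h4 2
    have hE : (Real.exp (-A))^2 = Real.exp (-(2*A)) := by
      rw [sq, ← Real.exp_add]; congr 1; ring
    have h7 : Real.exp (-(2*A)) ≤ Real.exp (-Real.sqrt (2*(n:ℝ)*x)/16) := by
      apply Real.exp_le_exp.mpr; linarith
    have h8 : (4:ℝ) ≤ 4*π*(m:ℝ) := by nlinarith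
    calc (F i)^2 ≤ (2 * F m * Real.exp (-A))^2 := h5
    _ = (F m)^2 * (4 * Real.exp (-(2*A))) := by
        rw [show (2 * F m * Real.exp (-A))^2 = (F m)^2 * (4 * (Real.exp (-A))^2) by ring, hE]
    _ ≤ (F m)^2 * (4*π*(m:ℝ)*Real.exp (-Real.sqrt (2*(n:ℝ)*x)/16)) := by
        apply mul_le_mul_of_nonneg_left _ (sq_nonneg _)
        calc 4 * Real.exp (-(2*A)) ≤ 4 * Real.exp (-Real.sqrt (2*(n:ℝ)*x)/16) :=
            mul_le_mul_of_nonneg_left h7 (by norm_num)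
        _ ≤ 4*π*(m:ℝ)*Real.exp (-Real.sqrt (2*(n:ℝ)*x)/16) :=
            mul_le_mul_of_nonneg_right h8 (Real.exp_pos _).le
    _ = 4*π*(m:ℝ)*Real.exp (-Real.sqrt (2*(n:ℝ)*x)/16) * (F m)^2 := by ring
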